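/- For any x ∈ ℝᵈ, xᵀ Φᵀ D (I − Π P) Φ x = ‖Φx‖²_Dir + (μᵀΦx)². -/

import Mathlib

open Matrix BigOperators Finset

/-- For any `x ∈ ℝᵈ`,
`xᵀ Φᵀ D (I − Π P) Φ x = ‖Φx‖²_Dir + (μᵀΦx)²`, where `Π = I − eμᵀ` and the
Dirichlet seminorm is `‖f‖²_Dir = (1/2)Σ_{s,s'} μ(s)P(s'|s)(f(s)−f(s'))²`. -/
theorem quadform_eq_dirichlet_plus_mean
    {n d : ℕ} (P : Matrix (Fin n) (Fin n) ℝ) (μ : Fin n → ℝ)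
    (hPnonneg : ∀ i j, 0 ≤ P i j)
    (hstoch : ∀ i, ∑ j, P i j = 1)
    (hμpos : ∀ i, 0 < μ i) (hμsum : ∑ i, μ i = 1)
    (hstat : ∀ j, ∑ i, μ i * P i j = μ j)
    (Φ : Matrix (Fin n) (Fin d) ℝ) (x : Fin d → ℝ) :
    x ⬝ᵥ ((Φᵀ * Matrix.diagonal μ *
        (1 - (1 - Matrix.vecMulVec (fun _ : Fin n => (1 : ℝ)) μ) * P) * Φ).mulVec x)
    = (1 / 2) * (∑ s, ∑ s', μ s * P s s' * (Φ.mulVec x s - Φ.mulVec x s') ^ 2)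
      + (∑ s, μ s * Φ.mulVec x s) ^ 2 := by
  set f := Φ.mulVec x with hf
  set A : Matrix (Fin n) (Fin n) ℝ :=
    1 - (1 - Matrix.vecMulVec (fun _ => (1 : ℝ)) μ) * P with hA
  have hAe : ∀ i j, A i j = (if i = j then (1:ℝ) else 0) - P i j + μ j := by
    intro i j
    simp [hA, Matrix.sub_apply, Matrix.mul_apply, Matrix.one_apply,
      Matrix.vecMulVec_apply, sub_mul, Finset.sum_sub_distrib, hstat j]
    ring
  have hL : x ⬝ᵥ ((Φᵀ * Matrix.diagonal μ * A * Φ).mulVec x)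
      = f ⬝ᵥ ((Matrix.diagonal μ * A).mulVec f) := by
    rw [show Φᵀ * Matrix.diagonal μ * A * Φ = Φᵀ * (Matrix.diagonal μ * A * Φ) by
      rw [Matrix.mul_assoc, Matrix.mul_assoc, Matrix.mul_assoc]]
    rw [← Matrix.mulVec_mulVec, Matrix.dotProduct_mulVec, Matrix.vecMul_transpose,
      ← Matrix.mulVec_mulVec, hf]
  rw [hL]
  have hexp : f ⬝ᵥ ((Matrix.diagonal μ * A).mulVec f)
      = ∑ i, ∑ j, f i * (μ i * ((if i = j then (1:ℝ) else 0) - P i j + μ j)) * f j := by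
    simp only [dotProduct, Matrix.mulVec, dotProduct, Matrix.diagonal_mul, hAe]
    apply Finset.sum_congr rfl; intro i _
    rw [Finset.mul_sum]
    apply Finset.sum_congr rfl; intro j _
    ring
  rw [hexp]
  have key : ∀ i j, f i * (μ i * ((if i = j then (1:ℝ) else 0) - P i j + μ j)) * f j
      = (if i = j then μ i * f i * f j else 0) - μ i * P i j * f i * f j
        + (μ i * f i) * (μ j * f j) := by
    intro i j
    by_cases h : i = j <;> simp [h] <;> ring
  simp only [key, Finset.sum_add_distrib, Finset.sum_sub_distrib]
  have h1 : ∑ i, ∑ j, (if i = j then μ i * f i * f j else 0) = ∑ i, μ i * f i * f i := by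
    simp
  have h2 : ∑ i, ∑ j, (μ i * f i) * (μ j * f j) = (∑ i, μ i * f i) ^ 2 := by
    rw [sq, Finset.sum_mul_sum]
  have h3 : ∑ s, ∑ s', μ s * P s s' * (f s - f s') ^ 2
      = ∑ s, ∑ s', (μ s * P s s' * f s ^ 2 + μ s * P s s' * f s' ^ 2
          - 2 * (μ s * P s s' * f s * f s')) := by
    apply Finset.sum_congr rfl; intro s _
    apply Finset.sum_congr rfl; intro s' _
    ring
  have h4 : ∑ s, ∑ s', μ s * P s s' * f s ^ 2 = ∑ s, μ s * f s ^ 2 := by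
    apply Finset.sum_congr rfl; intro s _
    calc ∑ s', μ s * P s s' * f s ^ 2 = (μ s * f s ^ 2) * ∑ s', P s s' := by
          rw [Finset.mul_sum]
          exact Finset.sum_congr rfl fun s' _ => by ring
      _ = μ s * f s ^ 2 := by rw [hstoch s, mul_one]
  have h5 : ∑ s, ∑ s', μ s * P s s' * f s' ^ 2 = ∑ s, μ s * f s ^ 2 := by
    rw [Finset.sum_comm]
    apply Finset.sum_congr rfl; intro s' _
    calc ∑ s, μ s * P s s' * f s' ^ 2 = (∑ s, μ s * P s s') * f s' ^ 2 := by
          rw [Finset.sum_mul]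
      _ = μ s' * f s' ^ 2 := by rw [hstat s']
  rw [h1, h2, h3]
  simp only [Finset.sum_sub_distrib, Finset.sum_add_distrib, h4, h5]
  have h7 : ∑ i, μ i * f i * f i = ∑ i, μ i * f i ^ 2 :=
    Finset.sum_congr rfl fun i _ => by ring
  have h8 : ∑ s, ∑ s', 2 * (μ s * P s s' * f s * f s')
      = 2 * ∑ s, ∑ s', μ s * P s s' * f s * f s' := by
    simp only [← Finset.mul_sum]
  rw [h7, h8]; ring
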